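/- Let d ≥ 1, σ ≥ 0, λ₀ > 0, δ ∈ (0,1), θ₀ > 2λ₀, C_G > 0 and a > 0, and set λ(t) = λ₀(1+(1+t)^{−δ}). Fix θ₁ > 0 with 2θ₁ < θ₀ − 2λ₀. There exists a constant C₂ > 0, depending only on C_G, σ, θ₀, λ₀, δ and θ₁, such that the following holds. Let G^r : (ℤ^d∖{0}) × [0,∞) → ℂ satisfy |G^r_k(τ)| ≤ C_G ⟨k⟩^{−1} e^{−θ₀⟨|k|τ⟩} for all k ≠ 0 and τ ≥ 0, and let S : (ℤ^d∖{0}) × [0,∞) → ℂ be measurable with F[S](s,λ(s)) ≤ a e^{−θ₁⟨s⟩^{1−δ}} for all s ≥ 0. Define E_k(t) = S_k(t) + ∫₀^t G^r_k(t−s) S_k(s) ds. Then for all t ≥ 0: F[E](t,λ(t)) ≤ C₂ a e^{−θ₁⟨t⟩^{1−δ}}. -/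

import Mathlib

open MeasureTheory
open scoped ENNReal

noncomputable section

/-- `ℝ^d` with the Euclidean norm. -/
abbrev Ed (d : ℕ) := EuclideanSpace ℝ (Fin d)

/-- Embedding of `ℤ^d` into `ℝ^d`. -/
def toE {d : ℕ} (k : Fin d → ℤ) : Ed d := WithLp.toLp 2 (fun i => (k i : ℝ))

/-- Japanese bracket of a scalar: `⟨u⟩ = (1+u²)^{1/2}`. -/
def jap (u : ℝ) : ℝ := Real.sqrt (1 + u ^ 2)

/-- Japanese bracket of a vector: `⟨η⟩ = (1+|η|²)^{1/2}`. -/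
def japV {d : ℕ} (η : Ed d) : ℝ := Real.sqrt (1 + ‖η‖ ^ 2)

/-- Joint bracket `⟨k,η⟩ = (1+|k|²+|η|²)^{1/2}`. -/
def japKV {d : ℕ} (k : Fin d → ℤ) (η : Ed d) : ℝ := Real.sqrt (1 + ‖toE k‖ ^ 2 + ‖η‖ ^ 2)

/-- The analytic weight `A_{k,η}(z) = e^{z⟨k,η⟩} ⟨η⟩^σ`. -/
def wA (d : ℕ) (σ z : ℝ) (k : Fin d → ℤ) (η : Ed d) : ℝ :=
  Real.exp (z * japKV k η) * japV η ^ σ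

/-- The time-dependent analyticity radius `λ(t) = λ₀(1+(1+t)^{-δ})`. -/
def lam (lam0 δ t : ℝ) : ℝ := lam0 * (1 + (1 + t) ^ (-δ))

/-- The weighted norm `F[S](t,z) = Σ_{k≠0} A_{k,kt}(z) |S_k(t)|`, valued in `ℝ≥0∞`. -/
def Fnorm (d : ℕ) (σ : ℝ) (S : (Fin d → ℤ) → ℝ → ℂ) (t z : ℝ) : ℝ≥0∞ :=
  ∑' k : {k : Fin d → ℤ // k ≠ 0}, ENNReal.ofReal (wA d σ z k.1 (t • toE k.1) * ‖S k.1 t‖)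


set_option maxHeartbeats 1600000

section helpers

lemma jap_nonneg (u : ℝ) : 0 ≤ jap u := Real.sqrt_nonneg _

lemma one_le_jap (u : ℝ) : 1 ≤ jap u := by
  have h := Real.sqrt_le_sqrt (show (1:ℝ) ≤ 1 + u ^ 2 by nlinarith [sq_nonneg u])
  rwa [Real.sqrt_one] at h

lemma le_jap (u : ℝ) : u ≤ jap u := by
  rw [jap]
  calc u ≤ |u| := le_abs_self u
  _ = Real.sqrt (u ^ 2) := (Real.sqrt_sq_eq_abs u).symm
  _ ≤ _ := Real.sqrt_le_sqrt (by linarith)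

lemma jap_mono {u v : ℝ} (hu : 0 ≤ u) (huv : u ≤ v) : jap u ≤ jap v :=
  Real.sqrt_le_sqrt (by nlinarith)

lemma jap_le_one_add {t : ℝ} (ht : 0 ≤ t) : jap t ≤ 1 + t := by
  rw [jap, show 1 + t = Real.sqrt ((1 + t) ^ 2) from (Real.sqrt_sq (by linarith)).symm]
  exact Real.sqrt_le_sqrt (by nlinarith)

lemma rpow_mul_exp_le (σ : ℝ) (hσ : 0 ≤ σ) {ε x : ℝ} (hε : 0 < ε) (hx : 1 ≤ x) :
    x ^ σ * Real.exp (-(ε * x)) ≤ (Nat.factorial ⌈σ⌉₊ : ℝ) / ε ^ (⌈σ⌉₊) := by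
  set n := ⌈σ⌉₊ with hn
  have hx0 : (0:ℝ) < x := lt_of_lt_of_le one_pos hx
  have h1 : x ^ σ ≤ x ^ (n:ℝ) := Real.rpow_le_rpow_of_exponent_le hx (Nat.le_ceil σ)
  have h2 : x ^ (n:ℝ) = x ^ n := Real.rpow_natCast x n
  have h3 : (ε * x) ^ n / (Nat.factorial n : ℝ) ≤ Real.exp (ε * x) := by
    calc (ε * x) ^ n / (Nat.factorial n : ℝ)
        ≤ ∑ i ∈ Finset.range (n + 1), (ε * x) ^ i / (Nat.factorial i : ℝ) := by
          refine Finset.single_le_sum (f := fun i => (ε * x) ^ i / (Nat.factorial i : ℝ)) ?_ ?_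
          · intro i _
            have : (0:ℝ) < (Nat.factorial i : ℝ) := by exact_mod_cast Nat.factorial_pos i
            positivity
          · simp
    _ ≤ Real.exp (ε * x) := Real.sum_le_exp_of_nonneg (by positivity) _
  have hfac : (0:ℝ) < (Nat.factorial n : ℝ) := by exact_mod_cast Nat.factorial_pos n
  have key : x ^ n * ε ^ n ≤ (Nat.factorial n : ℝ) * Real.exp (ε * x) := by
    have h4 := (div_le_iff₀ hfac).mp h3
    calc x ^ n * ε ^ n = (ε * x) ^ n := by rw [mul_pow]; ring
    _ ≤ Real.exp (ε * x) * (Nat.factorial n : ℝ) := h4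
    _ = (Nat.factorial n : ℝ) * Real.exp (ε * x) := by ring
  have hxe : x ^ n ≤ (Nat.factorial n : ℝ) / ε ^ n * Real.exp (ε * x) := by
    rw [div_mul_eq_mul_div, le_div_iff₀ (by positivity)]
    linarith
  calc x ^ σ * Real.exp (-(ε * x)) ≤ x ^ n * Real.exp (-(ε * x)) := by
        rw [← h2]; exact mul_le_mul_of_nonneg_right h1 (Real.exp_nonneg _)
  _ ≤ ((Nat.factorial n : ℝ) / ε ^ n * Real.exp (ε * x)) * Real.exp (-(ε * x)) :=
      mul_le_mul_of_nonneg_right hxe (Real.exp_nonneg _)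
  _ = (Nat.factorial n : ℝ) / ε ^ n := by rw [mul_assoc, ← Real.exp_add]; simp

lemma real_rpow_add_le {p a b : ℝ} (hp0 : 0 ≤ p) (hp1 : p ≤ 1) (ha : 0 ≤ a) (hb : 0 ≤ b) :
    (a + b) ^ p ≤ a ^ p + b ^ p := by
  have h := NNReal.rpow_add_le_add_rpow a.toNNReal b.toNNReal hp0 hp1
  have h2 := NNReal.coe_le_coe.mpr h
  push_cast [NNReal.coe_rpow] at h2
  rwa [Real.coe_toNNReal _ ha, Real.coe_toNNReal _ hb] at h2

lemma jap_rpow_sub (δ : ℝ) (hδ0 : 0 < δ) (hδ1 : δ < 1) {s t : ℝ} (hs : 0 ≤ s) (hst : s ≤ t) :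
    jap t ^ (1 - δ) ≤ Real.sqrt 2 * jap (t - s) + jap s ^ (1 - δ) := by
  have hp0 : (0:ℝ) ≤ 1 - δ := by linarith
  have hp1 : (1:ℝ) - δ ≤ 1 := by linarith
  have ht : 0 ≤ t := le_trans hs hst
  have hu : 0 ≤ t - s := by linarith
  have h1 : jap t ^ (1 - δ) ≤ ((1 + (t - s)) + s) ^ (1 - δ) :=
    Real.rpow_le_rpow (jap_nonneg t) (by have := jap_le_one_add ht; linarith) hp0
  have h2 : ((1 + (t - s)) + s) ^ (1 - δ) ≤ (1 + (t - s)) ^ (1 - δ) + s ^ (1 - δ) :=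
    real_rpow_add_le hp0 hp1 (by linarith) hs
  have hb : 1 + (t - s) ≤ Real.sqrt 2 * jap (t - s) := by
    rw [jap, ← Real.sqrt_mul (by norm_num : (0:ℝ) ≤ 2),
      show 1 + (t - s) = Real.sqrt ((1 + (t - s)) ^ 2) from (Real.sqrt_sq (by linarith)).symm]
    exact Real.sqrt_le_sqrt (by nlinarith [sq_nonneg (1 - (t - s))])
  have h1x : 1 ≤ Real.sqrt 2 * jap (t - s) := by
    have : (1:ℝ) ≤ Real.sqrt 2 := by
      rw [show (1:ℝ) = Real.sqrt 1 by rw [Real.sqrt_one]]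
      exact Real.sqrt_le_sqrt (by norm_num)
    nlinarith [one_le_jap (t - s)]
  have h3 : (1 + (t - s)) ^ (1 - δ) ≤ Real.sqrt 2 * jap (t - s) := by
    calc (1 + (t - s)) ^ (1 - δ) ≤ (Real.sqrt 2 * jap (t - s)) ^ (1 - δ) :=
          Real.rpow_le_rpow (by linarith) hb hp0
    _ ≤ (Real.sqrt 2 * jap (t - s)) ^ (1:ℝ) := Real.rpow_le_rpow_of_exponent_le h1x hp1
    _ = _ := Real.rpow_one _
  have h4 : s ^ (1 - δ) ≤ jap s ^ (1 - δ) := Real.rpow_le_rpow hs (le_jap s) hp0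
  linarith

lemma lam_pos {lam0 δ : ℝ} (hl : 0 < lam0) (t : ℝ) (ht : 0 ≤ t) : 0 < lam lam0 δ t := by
  have h1 : (0:ℝ) < (1 + t) ^ (-δ) := Real.rpow_pos_of_pos (by linarith) _
  rw [lam]; nlinarith

lemma lam_le_two {lam0 δ : ℝ} (hl : 0 < lam0) (hδ : 0 < δ) (t : ℝ) (ht : 0 ≤ t) :
    lam lam0 δ t ≤ 2 * lam0 := by
  have h1 : (1 + t) ^ (-δ) ≤ 1 :=
    Real.rpow_le_one_of_one_le_of_nonpos (by linarith) (by linarith)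
  rw [lam]; nlinarith

lemma lam_anti {lam0 δ : ℝ} (hl : 0 < lam0) (hδ : 0 < δ) {s t : ℝ} (hs : 0 ≤ s) (hst : s ≤ t) :
    lam lam0 δ t ≤ lam lam0 δ s := by
  have h1 : (1 + t) ^ (-δ) ≤ (1 + s) ^ (-δ) := by
    rw [Real.rpow_neg (by linarith), Real.rpow_neg (by linarith)]
    have h2 : (1 + s) ^ δ ≤ (1 + t) ^ δ :=
      Real.rpow_le_rpow (by linarith) (by linarith) hδ.le
    have h3 : (0:ℝ) < (1 + s) ^ δ := Real.rpow_pos_of_pos (by linarith) _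
    exact inv_anti₀ h3 h2
  rw [lam, lam]; nlinarith

lemma weight_bound (d : ℕ) (σ lam0 δ θ₀ θ₁ C_G : ℝ)
    (hσ : 0 ≤ σ) (hl : 0 < lam0) (hδ0 : 0 < δ) (hδ1 : δ < 1) (hCG : 0 < C_G)
    (hθ₁ : 0 < θ₁) (hθθ : 2 * θ₁ < θ₀ - 2 * lam0)
    (k : Fin d → ℤ) (hk : 1 ≤ ‖toE k‖) {s t : ℝ} (hs : 0 ≤ s) (hst : s ≤ t) :
    wA d σ (lam lam0 δ t) k (t • toE k) *
      (C_G * (japV (toE k))⁻¹ * Real.exp (-θ₀ * jap (‖toE k‖ * (t - s))))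
      ≤ (C_G * ((2:ℝ) ^ (σ / 2) * ((Nat.factorial ⌈σ⌉₊ : ℝ) / (θ₀ - 2 * lam0 - 2 * θ₁) ^ ⌈σ⌉₊)))
          * Real.exp (-(2 * θ₁) * jap (t - s)) * wA d σ (lam lam0 δ s) k (s • toE k) := by
  set m := ‖toE k‖ with hm
  set u := t - s with hu
  set ε := θ₀ - 2 * lam0 - 2 * θ₁ with hε
  have hεpos : 0 < ε := by rw [hε]; linarith
  have hm0 : (0:ℝ) < m := lt_of_lt_of_le one_pos hk
  have ht : 0 ≤ t := le_trans hs hst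
  have hu0 : 0 ≤ u := by rw [hu]; linarith
  have hnorm : ∀ r : ℝ, 0 ≤ r → ‖r • toE k‖ = r * m := by
    intro r hr; rw [norm_smul, Real.norm_eq_abs, abs_of_nonneg hr, hm]
  -- names
  set Ls := lam lam0 δ s with hLs
  set Lt := lam lam0 δ t with hLt
  have hJt : japKV k (t • toE k) = Real.sqrt (1 + m ^ 2 + (t * m) ^ 2) := by
    rw [japKV, hnorm t ht, hm]
  have hJs : japKV k (s • toE k) = Real.sqrt (1 + m ^ 2 + (s * m) ^ 2) := by
    rw [japKV, hnorm s hs, hm]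
  have hVt : japV (t • toE k) = Real.sqrt (1 + (t * m) ^ 2) := by
    rw [japV, hnorm t ht]
  have hVs : japV (s • toE k) = Real.sqrt (1 + (s * m) ^ 2) := by
    rw [japV, hnorm s hs]
  set Jt := Real.sqrt (1 + m ^ 2 + (t * m) ^ 2) with hJtd
  set Js := Real.sqrt (1 + m ^ 2 + (s * m) ^ 2) with hJsd
  set Vt := Real.sqrt (1 + (t * m) ^ 2) with hVtd
  set Vs := Real.sqrt (1 + (s * m) ^ 2) with hVsd
  set X := jap (m * u) with hX
  have hX1 : 1 ≤ X := one_le_jap _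
  have hJs_nonneg : 0 ≤ Js := Real.sqrt_nonneg _
  have hJs_sq : Js ^ 2 = 1 + m ^ 2 + (s * m) ^ 2 := Real.sq_sqrt (by positivity)
  have hms : m * s ≤ Js := by
    rw [hJsd, show m * s = Real.sqrt ((m * s) ^ 2) from (Real.sqrt_sq (by positivity)).symm]
    exact Real.sqrt_le_sqrt (by nlinarith)
  -- (a) J_t ≤ J_s + m*u
  have hJ : Jt ≤ Js + m * u := by
    rw [hJtd, show Js + m * u = Real.sqrt ((Js + m * u) ^ 2) from
      (Real.sqrt_sq (by positivity)).symm]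
    apply Real.sqrt_le_sqrt
    rw [hu]
    nlinarith [hJs_sq, mul_le_mul_of_nonneg_right hms
      (mul_nonneg hm0.le (by linarith : (0:ℝ) ≤ t - s)), hJs_nonneg,
      mul_nonneg hm0.le hs]
  have hJts : Js ≤ Jt := Real.sqrt_le_sqrt (by
    nlinarith [mul_self_le_mul_self (mul_nonneg hs hm0.le)
      (mul_le_mul_of_nonneg_right hst hm0.le)])
  -- exponent bound
  have hlam_le : Lt ≤ 2 * lam0 := lam_le_two hl hδ0 t ht
  have hlam_anti : Lt ≤ Ls := lam_anti hl hδ0 hs hst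
  have hlam_pos : 0 < Lt := lam_pos hl t ht
  have hmuX : m * u ≤ X := le_jap _
  have hexp1 : Lt * Jt ≤ Ls * Js + 2 * lam0 * X := by
    have h1 : Lt * Jt = Lt * Js + Lt * (Jt - Js) := by ring
    nlinarith [mul_nonneg hm0.le hu0]
  -- (b) V_t ≤ √2 * (V_s * X)
  have hVle : Vt ≤ Real.sqrt 2 * (Vs * X) := by
    rw [hVtd, hVsd, hX, jap, ← Real.sqrt_mul (by positivity : (0:ℝ) ≤ 1 + (s*m)^2),
      ← Real.sqrt_mul (by norm_num : (0:ℝ) ≤ 2)]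
    apply Real.sqrt_le_sqrt
    rw [hu]
    nlinarith [mul_nonneg (sq_nonneg m) (sq_nonneg (t - 2*s)),
      mul_nonneg (sq_nonneg (s*m)) (sq_nonneg (m*(t-s))), sq_nonneg (m*(t-s)), sq_nonneg (s*m)]
  have hVs_nonneg : 0 ≤ Vs := Real.sqrt_nonneg _
  have hVt_nonneg : 0 ≤ Vt := Real.sqrt_nonneg _
  have hX0 : (0:ℝ) < X := lt_of_lt_of_le one_pos hX1
  have hVσ : Vt ^ σ ≤ (2:ℝ) ^ (σ / 2) * (Vs ^ σ * X ^ σ) := by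
    calc Vt ^ σ ≤ (Real.sqrt 2 * (Vs * X)) ^ σ := Real.rpow_le_rpow hVt_nonneg hVle hσ
    _ = Real.sqrt 2 ^ σ * (Vs ^ σ * X ^ σ) := by
        rw [Real.mul_rpow (Real.sqrt_nonneg _) (by positivity),
          Real.mul_rpow hVs_nonneg hX0.le]
    _ = (2:ℝ) ^ (σ / 2) * (Vs ^ σ * X ^ σ) := by
        rw [Real.sqrt_eq_rpow, ← Real.rpow_mul (by norm_num : (0:ℝ) ≤ 2),
          show 1/2*σ = σ/2 by ring]
  -- (c) pow-exp
  have hCc : X ^ σ * Real.exp (-(ε * X)) ≤ (Nat.factorial ⌈σ⌉₊ : ℝ) / ε ^ ⌈σ⌉₊ :=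
    rpow_mul_exp_le σ hσ hεpos hX1
  have hXu : jap u ≤ X := jap_mono hu0 (by nlinarith)
  have hinv : (japV (toE k))⁻¹ ≤ 1 := by
    rw [japV]
    have h1 : (1:ℝ) ≤ Real.sqrt (1 + ‖toE k‖ ^ 2) := by
      have := Real.sqrt_le_sqrt (show (1:ℝ) ≤ 1 + ‖toE k‖ ^ 2 by nlinarith [sq_nonneg ‖toE k‖])
      rwa [Real.sqrt_one] at this
    exact inv_le_one_of_one_le₀ h1
  have hinv0 : 0 ≤ (japV (toE k))⁻¹ := by rw [japV]; positivity
  -- assemble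
  rw [wA, wA, hJt, hJs, hVt, hVs]
  set N : ℝ := (Nat.factorial ⌈σ⌉₊ : ℝ) / ε ^ ⌈σ⌉₊ with hN
  have hN0 : 0 ≤ N := by
    rw [hN]
    have : (0:ℝ) < (Nat.factorial ⌈σ⌉₊ : ℝ) := by exact_mod_cast Nat.factorial_pos _
    positivity
  have hVtσ : 0 ≤ Vt ^ σ := Real.rpow_nonneg hVt_nonneg σ
  have hVsσ : 0 ≤ Vs ^ σ := Real.rpow_nonneg hVs_nonneg σ
  have hXσ : 0 ≤ X ^ σ := Real.rpow_nonneg hX0.le σ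
  have h2σ : (0:ℝ) ≤ (2:ℝ) ^ (σ/2) := Real.rpow_nonneg (by norm_num) _
  have hsplit : Real.exp (2 * lam0 * X) * Real.exp (-θ₀ * X)
      = Real.exp (-(ε * X)) * Real.exp (-(2 * θ₁) * X) := by
    rw [← Real.exp_add, ← Real.exp_add]; congr 1; rw [hε]; ring
  have hXuexp : Real.exp (-(2 * θ₁) * X) ≤ Real.exp (-(2 * θ₁) * jap u) := by
    have h := mul_le_mul_of_nonneg_left hXu (show (0:ℝ) ≤ 2 * θ₁ by linarith)
    exact Real.exp_le_exp.mpr (by linarith)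
  set PT := Vt ^ σ with hPT
  set PS := Vs ^ σ with hPS
  set PX := X ^ σ with hPX
  set TW := (2:ℝ) ^ (σ/2) with hTW
  calc Real.exp (Lt * Jt) * PT * (C_G * (japV (toE k))⁻¹ * Real.exp (-θ₀ * X))
      ≤ Real.exp (Lt * Jt) * PT * (C_G * 1 * Real.exp (-θ₀ * X)) := by
        refine mul_le_mul_of_nonneg_left ?_ (mul_nonneg (Real.exp_nonneg _) hVtσ)
        exact mul_le_mul_of_nonneg_right (mul_le_mul_of_nonneg_left hinv hCG.le)
          (Real.exp_nonneg _)
  _ ≤ Real.exp (Ls * Js + 2 * lam0 * X) * (TW * (PS * PX)) *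
        (C_G * 1 * Real.exp (-θ₀ * X)) := by
        refine mul_le_mul_of_nonneg_right ?_
          (mul_nonneg (mul_nonneg hCG.le zero_le_one) (Real.exp_nonneg _))
        exact mul_le_mul (Real.exp_le_exp.mpr hexp1) hVσ hVtσ (Real.exp_nonneg _)
  _ = (C_G * TW) * (Real.exp (Ls * Js) * PS) *
        (PX * Real.exp (-(ε * X))) * Real.exp (-(2 * θ₁) * X) := by
        rw [Real.exp_add]
        linear_combination (Real.exp (Ls * Js) * TW * PS * PX * C_G) * hsplit
  _ ≤ (C_G * TW) * (Real.exp (Ls * Js) * PS) * N * Real.exp (-(2 * θ₁) * jap u) := by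
        have hbase : 0 ≤ (C_G * TW) * (Real.exp (Ls * Js) * PS) :=
          mul_nonneg (mul_nonneg hCG.le h2σ) (mul_nonneg (Real.exp_nonneg _) hVsσ)
        apply mul_le_mul
        · exact mul_le_mul_of_nonneg_left hCc hbase
        · exact hXuexp
        · exact Real.exp_nonneg _
        · exact mul_nonneg hbase hN0
  _ = C_G * (TW * N) * Real.exp (-(2 * θ₁) * jap u) * (Real.exp (Ls * Js) * PS) := by
        ring

end helpers

/-- decay of the full electric field `E_k(t) = S_k(t) + ∫₀^t G^r_k(t-s) S_k(s) ds`: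
if `F[S](s,λ(s)) ≤ a e^{-θ₁⟨s⟩^{1-δ}}` and the Green kernel satisfies
`|G^r_k(τ)| ≤ C_G ⟨k⟩^{-1} e^{-θ₀⟨|k|τ⟩}`, then `F[E](t,λ(t)) ≤ C₂ a e^{-θ₁⟨t⟩^{1-δ}}`. -/

theorem electric_field_decay (d : ℕ) (hd : 1 ≤ d) (σ lam0 δ θ₀ C_G : ℝ)
    (hσ : 0 ≤ σ) (hl : 0 < lam0) (hδ0 : 0 < δ) (hδ1 : δ < 1)
    (hθ₀ : θ₀ > 2 * lam0) (hCG : 0 < C_G)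
    (θ₁ : ℝ) (hθ₁ : 0 < θ₁) (hθθ : 2 * θ₁ < θ₀ - 2 * lam0) :
    ∃ C₂ > (0:ℝ), ∀ a > (0:ℝ),
      ∀ Gr : (Fin d → ℤ) → ℝ → ℂ,
      (∀ k : Fin d → ℤ, k ≠ 0 → ∀ τ : ℝ, 0 ≤ τ →
        ‖Gr k τ‖ ≤ C_G * (japV (toE k))⁻¹ * Real.exp (-θ₀ * jap (‖toE k‖ * τ))) →
      ∀ S : (Fin d → ℤ) → ℝ → ℂ, (∀ k, Measurable (S k)) →
      (∀ s : ℝ, 0 ≤ s →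
        Fnorm d σ S s (lam lam0 δ s) ≤
          ENNReal.ofReal (a * Real.exp (-θ₁ * jap s ^ (1 - δ)))) →
      ∀ t : ℝ, 0 ≤ t →
        Fnorm d σ (fun k τ => S k τ + ∫ s in (0:ℝ)..τ, Gr k (τ - s) * S k s)
            t (lam lam0 δ t) ≤
          ENNReal.ofReal (C₂ * a * Real.exp (-θ₁ * jap t ^ (1 - δ))) := by
  -- constants
  set ε := θ₀ - 2 * lam0 - 2 * θ₁ with hεdef
  have hε : 0 < ε := by rw [hεdef]; linarith
  set Cp : ℝ := C_G * ((2:ℝ) ^ (σ / 2) * ((Nat.factorial ⌈σ⌉₊ : ℝ) / ε ^ ⌈σ⌉₊)) with hCpdef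
  have hfac : (0:ℝ) < (Nat.factorial ⌈σ⌉₊ : ℝ) := by exact_mod_cast Nat.factorial_pos _
  have hCp : 0 < Cp := by
    rw [hCpdef]
    have h2σ : (0:ℝ) < (2:ℝ) ^ (σ / 2) := Real.rpow_pos_of_pos (by norm_num) _
    positivity
  have hsqrt2 : Real.sqrt 2 < 2 := by
    have h4 : Real.sqrt 4 = 2 := by
      rw [show (4:ℝ) = 2 ^ 2 by norm_num, Real.sqrt_sq (by norm_num : (0:ℝ) ≤ 2)]
    have := Real.sqrt_lt_sqrt (by norm_num : (0:ℝ) ≤ 2) (by norm_num : (2:ℝ) < 4)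
    rwa [h4] at this
  set c : ℝ := (2 - Real.sqrt 2) * θ₁ with hcdef
  have hc : 0 < c := by rw [hcdef]; nlinarith
  refine ⟨1 + Cp / c, by positivity, ?_⟩
  intro a ha Gr hGr S hSmeas hS t ht
  -- norms of nonzero lattice points are ≥ 1
  have hknorm : ∀ k : Fin d → ℤ, k ≠ 0 → 1 ≤ ‖toE k‖ := by
    intro k hk
    obtain ⟨i, hi⟩ := Function.ne_iff.mp hk
    have h1 : (1:ℝ) ≤ ‖toE k‖ ^ 2 := by
      rw [EuclideanSpace.norm_eq, Real.sq_sqrt (by positivity)]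
      have hterm : (1:ℝ) ≤ ‖toE k i‖ ^ 2 := by
        have : (1:ℝ) ≤ |(k i : ℝ)| := by
          have := Int.one_le_abs (by simpa using hi)
          calc (1:ℝ) ≤ (|k i| : ℝ) := by exact_mod_cast this
          _ = |(k i : ℝ)| := by push_cast; ring
        rw [show toE k i = ((k i : ℝ)) by simp [toE], Real.norm_eq_abs]
        nlinarith
      calc (1:ℝ) ≤ ‖toE k i‖ ^ 2 := hterm
      _ ≤ ∑ j, ‖toE k j‖ ^ 2 :=
        Finset.single_le_sum (f := fun j => ‖toE k j‖ ^ 2) (fun j _ => by positivity)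
          (Finset.mem_univ i)
    nlinarith [norm_nonneg (toE k)]
  -- weight nonneg / measurable
  have hW_nonneg : ∀ (z : ℝ) (k : Fin d → ℤ) (η : Ed d), 0 ≤ wA d σ z k η := by
    intro z k η
    rw [wA, japV]
    positivity
  have hWmeas : ∀ k : Fin d → ℤ, Measurable (fun s : ℝ => wA d σ (lam lam0 δ s) k (s • toE k)) := by
    intro k
    have hcont1 : Continuous (fun s : ℝ => japKV k (s • toE k)) := by
      unfold japKV
      fun_prop
    have hcont2 : Continuous (fun s : ℝ => japV (s • toE k) ^ σ) := by
      have : Continuous (fun s : ℝ => japV (s • toE k)) := by unfold japV; fun_prop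
      exact Real.continuous_rpow_const hσ |>.comp this
    have hlam : Measurable (fun s : ℝ => lam lam0 δ s) := by
      unfold lam
      exact (measurable_const.mul
        (measurable_const.add ((measurable_const.add measurable_id).pow measurable_const)))
    unfold wA
    exact ((hlam.mul hcont1.measurable).exp).mul hcont2.measurable
  -- per-term bound from the F-norm hypothesis
  have hterm : ∀ (k : {k : Fin d → ℤ // k ≠ 0}) (s : ℝ), 0 ≤ s →
      wA d σ (lam lam0 δ s) k.1 (s • toE k.1) * ‖S k.1 s‖ ≤
        a * Real.exp (-θ₁ * jap s ^ (1 - δ)) := by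
    intro k s hs
    have h1 : ENNReal.ofReal (wA d σ (lam lam0 δ s) k.1 (s • toE k.1) * ‖S k.1 s‖) ≤
        Fnorm d σ S s (lam lam0 δ s) := ENNReal.le_tsum k
    have h2 := h1.trans (hS s hs)
    rwa [ENNReal.ofReal_le_ofReal_iff (by positivity)] at h2
  -- time-decay inequality
  have htime : ∀ s : ℝ, 0 ≤ s → s ≤ t →
      Real.exp (-(2 * θ₁) * jap (t - s)) * (a * Real.exp (-θ₁ * jap s ^ (1 - δ))) ≤
        a * Real.exp (-θ₁ * jap t ^ (1 - δ)) * Real.exp (-(c * (t - s))) := by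
    intro s hs hst
    have hj := jap_rpow_sub δ hδ0 hδ1 hs hst
    have hju : t - s ≤ jap (t - s) := le_jap _
    have h1 : θ₁ * jap t ^ (1 - δ) + c * (t - s) ≤
        2 * θ₁ * jap (t - s) + θ₁ * jap s ^ (1 - δ) := by
      have e1 : θ₁ * jap t ^ (1 - δ) ≤ θ₁ * (Real.sqrt 2 * jap (t - s) + jap s ^ (1 - δ)) :=
        mul_le_mul_of_nonneg_left hj hθ₁.le
      have e2 : c * (t - s) ≤ c * jap (t - s) := mul_le_mul_of_nonneg_left hju hc.le
      have e3 : θ₁ * (Real.sqrt 2 * jap (t - s)) + c * jap (t - s) = 2 * θ₁ * jap (t - s) := by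
        rw [hcdef]; ring
      nlinarith
    calc Real.exp (-(2 * θ₁) * jap (t - s)) * (a * Real.exp (-θ₁ * jap s ^ (1 - δ)))
        = a * Real.exp (-(2 * θ₁) * jap (t - s) + -θ₁ * jap s ^ (1 - δ)) := by
          rw [Real.exp_add]; ring
    _ ≤ a * Real.exp (-θ₁ * jap t ^ (1 - δ) + -(c * (t - s))) := by
          refine mul_le_mul_of_nonneg_left (Real.exp_le_exp.mpr (by linarith)) ha.le
    _ = a * Real.exp (-θ₁ * jap t ^ (1 - δ)) * Real.exp (-(c * (t - s))) := by
          rw [Real.exp_add]; ring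
  -- measurability of the dominating integrand
  have hjapcont : Continuous (fun s : ℝ => jap (t - s)) := by unfold jap; fun_prop
  have hhmeas : ∀ k : {k : Fin d → ℤ // k ≠ 0}, Measurable fun s : ℝ =>
      ENNReal.ofReal (Cp * Real.exp (-(2 * θ₁) * jap (t - s)) *
        (wA d σ (lam lam0 δ s) k.1 (s • toE k.1) * ‖S k.1 s‖)) := by
    intro k
    refine Measurable.ennreal_ofReal ?_
    exact ((measurable_const.mul
      (Real.measurable_exp.comp (hjapcont.measurable.const_mul _))).mul
      ((hWmeas k.1).mul (hSmeas k.1).norm))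
  -- the key per-mode estimate
  have key : ∀ k : {k : Fin d → ℤ // k ≠ 0},
      ENNReal.ofReal (wA d σ (lam lam0 δ t) k.1 (t • toE k.1) *
        ‖S k.1 t + ∫ s in (0:ℝ)..t, Gr k.1 (t - s) * S k.1 s‖)
      ≤ ENNReal.ofReal (wA d σ (lam lam0 δ t) k.1 (t • toE k.1) * ‖S k.1 t‖)
        + ∫⁻ s in Set.Ioc (0:ℝ) t, ENNReal.ofReal
            (Cp * Real.exp (-(2 * θ₁) * jap (t - s)) *
              (wA d σ (lam lam0 δ s) k.1 (s • toE k.1) * ‖S k.1 s‖)) := by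
    intro k
    have hWt := hW_nonneg (lam lam0 δ t) k.1 (t • toE k.1)
    set h : ℝ → ℝ := fun s => Cp * Real.exp (-(2 * θ₁) * jap (t - s)) *
      (wA d σ (lam lam0 δ s) k.1 (s • toE k.1) * ‖S k.1 s‖) with hhdef
    have hh_nonneg : ∀ s, 0 ≤ h s := fun s =>
      mul_nonneg (mul_nonneg hCp.le (Real.exp_nonneg _))
        (mul_nonneg (hW_nonneg _ _ _) (norm_nonneg _))
    have hh_meas : Measurable h :=
      ((measurable_const.mul
        (Real.measurable_exp.comp (hjapcont.measurable.const_mul _))).mul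
        ((hWmeas k.1).mul (hSmeas k.1).norm))
    have hh_int : IntegrableOn h (Set.Ioc 0 t) := by
      refine Integrable.mono' (g := fun _ => Cp * a)
        ((integrableOn_const_iff (by finiteness)).mpr (Or.inr ?_)) hh_meas.aestronglyMeasurable ?_
      · rw [Real.volume_Ioc]; exact ENNReal.ofReal_lt_top
      · refine (ae_restrict_iff' measurableSet_Ioc).mpr (ae_of_all _ ?_)
        intro s hs
        rw [Real.norm_eq_abs, abs_of_nonneg (hh_nonneg s)]
        have h1 := hterm k s hs.1.le
        have h2 : Real.exp (-θ₁ * jap s ^ (1 - δ)) ≤ 1 := Real.exp_le_one_iff.mpr (by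
          have h0 : 0 ≤ jap s ^ (1 - δ) := Real.rpow_nonneg (jap_nonneg s) _
          nlinarith)
        have h4 : wA d σ (lam lam0 δ s) k.1 (s • toE k.1) * ‖S k.1 s‖ ≤ a := by nlinarith
        have h5 : Cp * Real.exp (-(2 * θ₁) * jap (t - s)) ≤ Cp := by
          have h3 : Real.exp (-(2 * θ₁) * jap (t - s)) ≤ 1 := Real.exp_le_one_iff.mpr (by
            nlinarith [jap_nonneg (t - s)])
          nlinarith [Real.exp_nonneg (-(2 * θ₁) * jap (t - s))]
        exact mul_le_mul h5 h4 (mul_nonneg (hW_nonneg _ _ _) (norm_nonneg _)) hCp.le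
    have hpt : ∀ s ∈ Set.Ioc (0:ℝ) t,
        wA d σ (lam lam0 δ t) k.1 (t • toE k.1) * ‖Gr k.1 (t - s) * S k.1 s‖ ≤ h s := by
      intro s hs
      have hs0 : (0:ℝ) ≤ s := hs.1.le
      have hst : s ≤ t := hs.2
      have hG := hGr k.1 k.2 (t - s) (by linarith)
      have hWb := weight_bound d σ lam0 δ θ₀ θ₁ C_G hσ hl hδ0 hδ1 hCG hθ₁ hθθ
        k.1 (hknorm k.1 k.2) hs0 hst
      calc wA d σ (lam lam0 δ t) k.1 (t • toE k.1) * ‖Gr k.1 (t - s) * S k.1 s‖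
          = wA d σ (lam lam0 δ t) k.1 (t • toE k.1) * ‖Gr k.1 (t - s)‖ * ‖S k.1 s‖ := by
            rw [norm_mul]; ring
      _ ≤ wA d σ (lam lam0 δ t) k.1 (t • toE k.1) *
            (C_G * (japV (toE k.1))⁻¹ * Real.exp (-θ₀ * jap (‖toE k.1‖ * (t - s)))) *
            ‖S k.1 s‖ :=
          mul_le_mul_of_nonneg_right (mul_le_mul_of_nonneg_left hG hWt) (norm_nonneg _)
      _ ≤ (Cp * Real.exp (-(2 * θ₁) * jap (t - s)) *
            wA d σ (lam lam0 δ s) k.1 (s • toE k.1)) * ‖S k.1 s‖ :=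
          mul_le_mul_of_nonneg_right hWb (norm_nonneg _)
      _ = h s := by rw [hhdef]; ring
    have hIle : wA d σ (lam lam0 δ t) k.1 (t • toE k.1) *
        (∫ s in Set.Ioc (0:ℝ) t, ‖Gr k.1 (t - s) * S k.1 s‖) ≤
        ∫ s in Set.Ioc (0:ℝ) t, h s := by
      rw [← integral_const_mul]
      refine integral_mono_of_nonneg (ae_of_all _ fun s =>
        mul_nonneg hWt (norm_nonneg _)) hh_int
        ((ae_restrict_iff' measurableSet_Ioc).mpr (ae_of_all _ hpt))
    have hofReal : ENNReal.ofReal (∫ s in Set.Ioc (0:ℝ) t, h s) =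
        ∫⁻ s in Set.Ioc (0:ℝ) t, ENNReal.ofReal (h s) :=
      ofReal_integral_eq_lintegral_ofReal hh_int (ae_of_all _ hh_nonneg)
    have htri : ‖S k.1 t + ∫ s in (0:ℝ)..t, Gr k.1 (t - s) * S k.1 s‖ ≤
        ‖S k.1 t‖ + ∫ s in Set.Ioc (0:ℝ) t, ‖Gr k.1 (t - s) * S k.1 s‖ := by
      refine (norm_add_le _ _).trans ?_
      have h2 := intervalIntegral.norm_integral_le_integral_norm_uIoc
        (f := fun s => Gr k.1 (t - s) * S k.1 s) (a := (0:ℝ)) (b := t) (μ := volume)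
      rw [Set.uIoc_of_le ht] at h2
      linarith
    calc ENNReal.ofReal (wA d σ (lam lam0 δ t) k.1 (t • toE k.1) *
          ‖S k.1 t + ∫ s in (0:ℝ)..t, Gr k.1 (t - s) * S k.1 s‖)
        ≤ ENNReal.ofReal (wA d σ (lam lam0 δ t) k.1 (t • toE k.1) * ‖S k.1 t‖ +
            wA d σ (lam lam0 δ t) k.1 (t • toE k.1) *
              (∫ s in Set.Ioc (0:ℝ) t, ‖Gr k.1 (t - s) * S k.1 s‖)) := by
          apply ENNReal.ofReal_le_ofReal
          have h3 := mul_le_mul_of_nonneg_left htri hWt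
          rw [mul_add] at h3
          exact h3
    _ ≤ ENNReal.ofReal (wA d σ (lam lam0 δ t) k.1 (t • toE k.1) * ‖S k.1 t‖) +
          ENNReal.ofReal (wA d σ (lam lam0 δ t) k.1 (t • toE k.1) *
            (∫ s in Set.Ioc (0:ℝ) t, ‖Gr k.1 (t - s) * S k.1 s‖)) := ENNReal.ofReal_add_le
    _ ≤ ENNReal.ofReal (wA d σ (lam lam0 δ t) k.1 (t • toE k.1) * ‖S k.1 t‖) +
          ∫⁻ s in Set.Ioc (0:ℝ) t, ENNReal.ofReal (h s) :=
        add_le_add_right ((ENNReal.ofReal_le_ofReal hIle).trans (le_of_eq hofReal)) _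
  -- exponential integral bound
  have hexp_cont : Continuous (fun s : ℝ => Real.exp (-(c * (t - s)))) := by fun_prop
  have hexp_int : IntegrableOn (fun s : ℝ => Real.exp (-(c * (t - s)))) (Set.Ioc 0 t) :=
    hexp_cont.integrableOn_Ioc
  have hFTC : ∫ s in (0:ℝ)..t, Real.exp (-(c * (t - s))) =
      1 / c - Real.exp (-(c * t)) / c := by
    have hderiv : ∀ x ∈ Set.uIcc (0:ℝ) t,
        HasDerivAt (fun s => Real.exp (-(c * (t - s))) / c)
          (Real.exp (-(c * (t - x)))) x := by
      intro x _
      have h0 : (fun s : ℝ => -(c * (t - s))) = fun s => c * s - c * t := by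
        funext s; ring
      have h1 : HasDerivAt (fun s : ℝ => -(c * (t - s))) c x := by
        rw [h0]
        simpa using ((hasDerivAt_id x).const_mul c).sub_const (c * t)
      have h2 := (Real.hasDerivAt_exp (-(c * (t - x)))).comp x h1
      have h3 := h2.div_const c
      have h4 : Real.exp (-(c * (t - x))) * c / c = Real.exp (-(c * (t - x))) := by
        field_simp
      rw [h4] at h3
      exact h3
    have hint : IntervalIntegrable (fun s => Real.exp (-(c * (t - s)))) volume 0 t :=
      hexp_cont.intervalIntegrable _ _
    rw [intervalIntegral.integral_eq_sub_of_hasDerivAt hderiv hint]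
    simp
  have hlintexp : ∫⁻ s in Set.Ioc (0:ℝ) t, ENNReal.ofReal (Real.exp (-(c * (t - s)))) ≤
      ENNReal.ofReal (1 / c) := by
    rw [← ofReal_integral_eq_lintegral_ofReal hexp_int
      (ae_of_all _ fun s => Real.exp_nonneg _)]
    apply ENNReal.ofReal_le_ofReal
    rw [← intervalIntegral.integral_of_le ht, hFTC]
    have := Real.exp_nonneg (-(c * t))
    have hc' : 0 < 1 / c := by positivity
    nlinarith [div_nonneg (Real.exp_nonneg (-(c * t))) hc.le]
  -- assemble
  set K : ℝ := Cp * (a * Real.exp (-θ₁ * jap t ^ (1 - δ))) with hKdef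
  have hK0 : 0 ≤ K := by
    rw [hKdef]; positivity
  calc Fnorm d σ (fun k τ => S k τ + ∫ s in (0:ℝ)..τ, Gr k (τ - s) * S k s) t (lam lam0 δ t)
      ≤ ∑' k : {k : Fin d → ℤ // k ≠ 0},
          (ENNReal.ofReal (wA d σ (lam lam0 δ t) k.1 (t • toE k.1) * ‖S k.1 t‖)
            + ∫⁻ s in Set.Ioc (0:ℝ) t, ENNReal.ofReal
                (Cp * Real.exp (-(2 * θ₁) * jap (t - s)) *
                  (wA d σ (lam lam0 δ s) k.1 (s • toE k.1) * ‖S k.1 s‖))) := by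
        rw [Fnorm]; exact ENNReal.tsum_le_tsum key
  _ = Fnorm d σ S t (lam lam0 δ t) + ∑' k : {k : Fin d → ℤ // k ≠ 0},
        ∫⁻ s in Set.Ioc (0:ℝ) t, ENNReal.ofReal
          (Cp * Real.exp (-(2 * θ₁) * jap (t - s)) *
            (wA d σ (lam lam0 δ s) k.1 (s • toE k.1) * ‖S k.1 s‖)) := by
        rw [Fnorm, ENNReal.tsum_add]
  _ = Fnorm d σ S t (lam lam0 δ t) + ∫⁻ s in Set.Ioc (0:ℝ) t,
        ∑' k : {k : Fin d → ℤ // k ≠ 0}, ENNReal.ofReal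
          (Cp * Real.exp (-(2 * θ₁) * jap (t - s)) *
            (wA d σ (lam lam0 δ s) k.1 (s • toE k.1) * ‖S k.1 s‖)) := by
        rw [lintegral_tsum (fun k => (hhmeas k).aemeasurable)]
  _ ≤ ENNReal.ofReal (a * Real.exp (-θ₁ * jap t ^ (1 - δ))) +
        ∫⁻ s in Set.Ioc (0:ℝ) t, ENNReal.ofReal (K * Real.exp (-(c * (t - s)))) := by
        refine add_le_add (hS t ht) ?_
        refine setLIntegral_mono ?_ ?_
        · exact Measurable.ennreal_ofReal (measurable_const.mul hexp_cont.measurable)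
        · intro s hs
          have hs0 : (0:ℝ) ≤ s := hs.1.le
          have hst : s ≤ t := hs.2
          have e2 : (0:ℝ) ≤ Cp * Real.exp (-(2 * θ₁) * jap (t - s)) :=
            mul_nonneg hCp.le (Real.exp_nonneg _)
          calc ∑' k : {k : Fin d → ℤ // k ≠ 0}, ENNReal.ofReal
                (Cp * Real.exp (-(2 * θ₁) * jap (t - s)) *
                  (wA d σ (lam lam0 δ s) k.1 (s • toE k.1) * ‖S k.1 s‖))
              = ENNReal.ofReal (Cp * Real.exp (-(2 * θ₁) * jap (t - s))) *
                  Fnorm d σ S s (lam lam0 δ s) := by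
                rw [Fnorm, ← ENNReal.tsum_mul_left]
                exact tsum_congr fun k => ENNReal.ofReal_mul e2
          _ ≤ ENNReal.ofReal (Cp * Real.exp (-(2 * θ₁) * jap (t - s))) *
                ENNReal.ofReal (a * Real.exp (-θ₁ * jap s ^ (1 - δ))) :=
              mul_le_mul_right (hS s hs0) _
          _ = ENNReal.ofReal (Cp * Real.exp (-(2 * θ₁) * jap (t - s)) *
                (a * Real.exp (-θ₁ * jap s ^ (1 - δ)))) :=
              (ENNReal.ofReal_mul e2).symm
          _ ≤ ENNReal.ofReal (K * Real.exp (-(c * (t - s)))) := by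
              apply ENNReal.ofReal_le_ofReal
              have h6 := htime s hs0 hst
              rw [hKdef]
              calc Cp * Real.exp (-(2 * θ₁) * jap (t - s)) *
                    (a * Real.exp (-θ₁ * jap s ^ (1 - δ)))
                  = Cp * (Real.exp (-(2 * θ₁) * jap (t - s)) *
                      (a * Real.exp (-θ₁ * jap s ^ (1 - δ)))) := by ring
              _ ≤ Cp * (a * Real.exp (-θ₁ * jap t ^ (1 - δ)) * Real.exp (-(c * (t - s)))) :=
                    mul_le_mul_of_nonneg_left h6 hCp.le
              _ = Cp * (a * Real.exp (-θ₁ * jap t ^ (1 - δ))) * Real.exp (-(c * (t - s))) := by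
                    ring
  _ ≤ ENNReal.ofReal (a * Real.exp (-θ₁ * jap t ^ (1 - δ))) + ENNReal.ofReal (K * (1 / c)) := by
        refine add_le_add_right ?_ _
        calc ∫⁻ s in Set.Ioc (0:ℝ) t, ENNReal.ofReal (K * Real.exp (-(c * (t - s))))
            = ∫⁻ s in Set.Ioc (0:ℝ) t,
                ENNReal.ofReal K * ENNReal.ofReal (Real.exp (-(c * (t - s)))) := by
              congr 1; funext s; rw [ENNReal.ofReal_mul hK0]
        _ = ENNReal.ofReal K * ∫⁻ s in Set.Ioc (0:ℝ) t,
              ENNReal.ofReal (Real.exp (-(c * (t - s)))) :=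
            lintegral_const_mul _ (Measurable.ennreal_ofReal hexp_cont.measurable)
        _ ≤ ENNReal.ofReal K * ENNReal.ofReal (1 / c) := mul_le_mul_right hlintexp _
        _ = ENNReal.ofReal (K * (1 / c)) := (ENNReal.ofReal_mul hK0).symm
  _ = ENNReal.ofReal ((1 + Cp / c) * a * Real.exp (-θ₁ * jap t ^ (1 - δ))) := by
        rw [← ENNReal.ofReal_add (by positivity) (by rw [hKdef]; positivity)]
        congr 1
        rw [hKdef]
        field_simp
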